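/- Let G = C_k be a cycle of length k ≥ 3. Then the graph G_∅ from the parity construction is isomorphic to the disjoint union of two cycles of length k, and G_{\{v\}} (for any vertex v) is isomorphic to the cycle of length 2k. -/

import Mathlib

open SimpleGraph

variable {V : Type}

/-- Vertices of the parity construction `G_U`: pairs `(v, S)` with `S` a set of edges
incident to `v` whose cardinality has the parity of `|{v} ∩ U|`. -/
def ParityVert (G : SimpleGraph V) (U : Set V) : Type :=
  {p : V × Set (Sym2 V) //
    p.2 ⊆ G.incidenceSet p.1 ∧ p.2.ncard % 2 = ({p.1} ∩ U : Set V).ncard % 2}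

/-- The parity construction `G_U`: `(v,S)` is adjacent to `(u,T)` iff `uv ∈ E(G)` and
`uv ∉ S △ T`. -/
def parityGraph (G : SimpleGraph V) (U : Set V) : SimpleGraph (ParityVert G U) where
  Adj x y := G.Adj x.1.1 y.1.1 ∧ s(x.1.1, y.1.1) ∉ symmDiff x.1.2 y.1.2
  symm := ⟨by
    rintro x y ⟨h1, h2⟩
    exact ⟨h1.symm, by rw [Sym2.eq_swap, symmDiff_comm]; exact h2⟩⟩
  loopless := ⟨fun x h => G.loopless.irrefl _ h.1⟩

open Fin.CommRing

-- classification lemmas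
lemma subset_pair_cases {α : Type*} {a b : α} {S : Set α} (hS : S ⊆ {a, b}) :
    S = ∅ ∨ S = {a} ∨ S = {b} ∨ S = {a, b} := by
  by_cases ha : a ∈ S <;> by_cases hb : b ∈ S
  · exact Or.inr (Or.inr (Or.inr (hS.antisymm (by
      rintro x (rfl | rfl) <;> assumption))))
  · refine Or.inr (Or.inl (le_antisymm ?_ (by simpa using ha)))
    rintro x hx
    rcases hS hx with rfl | rfl
    · rfl
    · exact absurd hx hb
  · refine Or.inr (Or.inr (Or.inl (le_antisymm ?_ (by simpa using hb))))
    rintro x hx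
    rcases hS hx with rfl | rfl
    · exact absurd hx ha
    · rfl
  · refine Or.inl (Set.eq_empty_iff_forall_notMem.2 fun x hx => ?_)
    rcases hS hx with rfl | rfl
    · exact ha hx
    · exact hb hx

lemma subset_pair_even {α : Type*} {a b : α} (hab : a ≠ b) {S : Set α}
    (hS : S ⊆ {a, b}) (h : S.ncard % 2 = 0) : S = ∅ ∨ S = {a, b} := by
  rcases subset_pair_cases hS with rfl | rfl | rfl | rfl
  · exact Or.inl rfl
  · simp [Set.ncard_singleton] at h
  · simp [Set.ncard_singleton] at h
  · exact Or.inr rfl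

lemma subset_pair_odd {α : Type*} {a b : α} (hab : a ≠ b) {S : Set α}
    (hS : S ⊆ {a, b}) (h : S.ncard % 2 = 1) : S = {a} ∨ S = {b} := by
  rcases subset_pair_cases hS with rfl | rfl | rfl | rfl
  · simp at h
  · exact Or.inl rfl
  · exact Or.inr rfl
  · rw [Set.ncard_pair hab] at h; simp at h

variable {m : ℕ}

lemma fin_two_ne_zero : (2 : Fin (m + 3)) ≠ 0 := by
  intro h
  have : (2 : Fin (m+3)).val = 2 := by simp [Fin.val_two]
  rw [h] at this
  simp at this

lemma fin_succ_ne_self (v : Fin (m+3)) : v + 1 ≠ v := by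
  intro h
  have : (1 : Fin (m+3)) = 0 := by linear_combination h
  exact one_ne_zero this

lemma cyc_adj_iff {u v : Fin (m+3)} :
    (cycleGraph (m+3)).Adj u v ↔ v = u + 1 ∨ u = v + 1 := by
  rw [cycleGraph_adj]
  constructor
  · rintro (h | h)
    · exact Or.inr (by linear_combination h)
    · exact Or.inl (by linear_combination h)
  · rintro (h | h)
    · exact Or.inr (by linear_combination h)
    · exact Or.inl (by linear_combination h)

lemma adj_succ (v : Fin (m+3)) : (cycleGraph (m+3)).Adj v (v+1) :=
  cyc_adj_iff.2 (Or.inl rfl)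

/-- the edge from `v` to `v+1` -/
abbrev cedge (v : Fin (m+3)) : Sym2 (Fin (m+3)) := s(v, v+1)

lemma cedge_injective : Function.Injective (cedge (m := m)) := by
  intro u v h
  rw [Sym2.eq_iff] at h
  rcases h with ⟨h1, _⟩ | ⟨h1, h2⟩
  · exact h1
  · exact absurd (by linear_combination h2 - h1) (fin_two_ne_zero (m := m))

lemma cyc_incidenceSet (v : Fin (m+3)) :
    (cycleGraph (m+3)).incidenceSet v = {cedge (v-1), cedge v} := by
  ext e
  induction e using Sym2.ind with
  | _ a b =>
    rw [mk'_mem_incidenceSet_iff, Set.mem_insert_iff, Set.mem_singleton_iff,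
        Sym2.eq_iff, Sym2.eq_iff, cyc_adj_iff]
    constructor
    · rintro ⟨hab | hab, hv | hv⟩
      · exact Or.inr (Or.inl ⟨hv.symm, by linear_combination hab - hv⟩)
      · exact Or.inl (Or.inl ⟨by linear_combination -hv - hab, by linear_combination -hv⟩)
      · exact Or.inl (Or.inr ⟨by linear_combination -hv, by linear_combination -hv - hab⟩)
      · exact Or.inr (Or.inr ⟨by linear_combination -hv + hab, by linear_combination -hv⟩)
    · rintro ((⟨ha, hb⟩ | ⟨ha, hb⟩) | ⟨ha, hb⟩ | ⟨ha, hb⟩)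
      · exact ⟨Or.inl (by linear_combination hb - ha), Or.inr (by linear_combination -hb)⟩
      · exact ⟨Or.inr (by linear_combination ha - hb), Or.inl (by linear_combination -ha)⟩
      · exact ⟨Or.inl (by linear_combination hb - ha), Or.inl ha.symm⟩
      · exact ⟨Or.inr (by linear_combination ha - hb), Or.inr hb.symm⟩

lemma cedge_pred_ne (v : Fin (m+3)) : cedge (v - 1) ≠ cedge v := by
  intro h
  have h2 := cedge_injective h
  have : (1 : Fin (m+3)) = 0 := by linear_combination -h2
  exact one_ne_zero this

lemma cyc_incidence_ncard (v : Fin (m+3)) :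
    ((cycleGraph (m+3)).incidenceSet v).ncard = 2 := by
  rw [cyc_incidenceSet, Set.ncard_pair (cedge_pred_ne v)]

lemma fin_succ_val_iff {n : ℕ} (x y : Fin (n+1)) :
    y = x + 1 ↔ (y.val = x.val + 1 ∨ (x.val = n ∧ y.val = 0)) := by
  rw [Fin.ext_iff, Fin.val_add_one]
  split_ifs with h
  · have hx : x.val = n := by rw [h]; rfl
    have hy := y.isLt
    omega
  · have hx : x.val ≠ n := fun hc => h (Fin.ext (by simp [hc]))
    have hy := y.isLt
    have hx2 := x.isLt
    omega

lemma mod2_helper {a n : ℕ} (hn : 0 < n) (h : a < 2 * n) :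
    a % n = if a < n then a else a - n := by
  split_ifs with h2
  · exact Nat.mod_eq_of_lt h2
  · rw [Nat.mod_eq_sub_mod (by omega)]
    exact Nat.mod_eq_of_lt (by omega)

/-- vertex component of the 2k-cycle parametrization -/
def pvert (m : ℕ) (v0 : Fin (m+3)) (i : Fin (2*(m+3))) : Fin (m+3) :=
  v0 + ⟨i.val % (m+3), Nat.mod_lt _ (by omega)⟩

/-- edge-set component of the 2k-cycle parametrization -/
def pset (m : ℕ) (v0 : Fin (m+3)) (i : Fin (2*(m+3))) : Set (Sym2 (Fin (m+3))) :=
  if i.val = 0 then {cedge v0}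
  else if i.val = m+3 then {cedge (v0-1)}
  else if i.val < m+3 then (cycleGraph (m+3)).incidenceSet (pvert m v0 i)
  else ∅

lemma pvert_eq_v0 {v0 : Fin (m+3)} {i : Fin (2*(m+3))} (h : i.val % (m+3) = 0) :
    pvert m v0 i = v0 := by
  unfold pvert
  rw [show (⟨i.val % (m+3), Nat.mod_lt _ (by omega)⟩ : Fin (m+3)) = 0 from Fin.ext (by simp [h])]
  exact add_zero v0

lemma pvert_ne_v0 {v0 : Fin (m+3)} {i : Fin (2*(m+3))} (h : i.val % (m+3) ≠ 0) :
    pvert m v0 i ≠ v0 := by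
  unfold pvert
  intro hc
  apply h
  have : (⟨i.val % (m+3), Nat.mod_lt _ (by omega)⟩ : Fin (m+3)) = 0 := by
    have := add_right_inj (a := v0) (b := (⟨i.val % (m+3), Nat.mod_lt _ (by omega)⟩ : Fin (m+3)))
      (c := (0 : Fin (m+3)))
    rw [add_zero] at this
    exact this.1 hc
  simpa using congrArg Fin.val this

lemma pvert_succ_iff {v0 : Fin (m+3)} {i j : Fin (2*(m+3))} :
    pvert m v0 j = pvert m v0 i + 1 ↔
      (j.val % (m+3) = i.val % (m+3) + 1 ∨
        (i.val % (m+3) = m + 2 ∧ j.val % (m+3) = 0)) := by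
  unfold pvert
  rw [add_assoc, add_right_inj, fin_succ_val_iff]

lemma fin_sub_val {n : ℕ} (a b : Fin n) : (a - b).val = (n - b.val + a.val) % n := by
  rw [Fin.sub_def]

lemma cedge_mem_incidence (v : Fin (m+3)) : cedge v ∈ (cycleGraph (m+3)).incidenceSet v :=
  (mk'_mem_incidenceSet_iff _).2 ⟨adj_succ v, Or.inl rfl⟩

lemma cedge_pred_mem_incidence (v : Fin (m+3)) :
    cedge (v - 1) ∈ (cycleGraph (m+3)).incidenceSet v :=
  (mk'_mem_incidenceSet_iff _).2 ⟨adj_succ (v-1), Or.inr (by ring)⟩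

lemma pset_mem (v0 : Fin (m+3)) (i : Fin (2*(m+3))) :
    pset m v0 i ⊆ (cycleGraph (m+3)).incidenceSet (pvert m v0 i) ∧
    (pset m v0 i).ncard % 2 = (({pvert m v0 i} : Set (Fin (m+3))) ∩ {v0}).ncard % 2 := by
  have hil := i.isLt
  unfold pset
  split_ifs with h1 h2 h3
  · have hv : pvert m v0 i = v0 := pvert_eq_v0 (by simp [h1])
    rw [hv]
    refine ⟨Set.singleton_subset_iff.2 (cedge_mem_incidence v0), ?_⟩
    rw [Set.inter_self, Set.ncard_singleton, Set.ncard_singleton]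
  · have hv : pvert m v0 i = v0 := pvert_eq_v0 (by simp [h2])
    rw [hv]
    refine ⟨Set.singleton_subset_iff.2 (cedge_pred_mem_incidence v0), ?_⟩
    rw [Set.inter_self, Set.ncard_singleton, Set.ncard_singleton]
  · have hv : pvert m v0 i ≠ v0 := pvert_ne_v0 (by rw [Nat.mod_eq_of_lt h3]; exact h1)
    refine ⟨subset_rfl, ?_⟩
    rw [show ({pvert m v0 i} : Set (Fin (m+3))) ∩ {v0} = ∅ by simp [Ne.symm hv], Set.ncard_empty]
    rw [show (cycleGraph (m+3)).incidenceSet (pvert m v0 i) = _ from cyc_incidenceSet _,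
      Set.ncard_pair (cedge_pred_ne _)]
  · have hv : pvert m v0 i ≠ v0 := pvert_ne_v0 (by
      rw [mod2_helper (by omega) hil]
      simp only [if_neg h3]
      omega)
    refine ⟨Set.empty_subset _, ?_⟩
    rw [show ({pvert m v0 i} : Set (Fin (m+3))) ∩ {v0} = ∅ by simp [hv.symm], Set.ncard_empty,
      Set.ncard_empty]

lemma parity_adj {G : SimpleGraph V} {U : Set V} {x y : ParityVert G U} :
    (parityGraph G U).Adj x y ↔
      G.Adj x.1.1 y.1.1 ∧ (s(x.1.1, y.1.1) ∈ x.1.2 ↔ s(x.1.1, y.1.1) ∈ y.1.2) := by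
  show G.Adj x.1.1 y.1.1 ∧ s(x.1.1, y.1.1) ∉ symmDiff x.1.2 y.1.2 ↔ _
  rw [Set.mem_symmDiff]
  tauto

lemma part1 (m : ℕ) : Nonempty (parityGraph (cycleGraph (m+3)) (∅ : Set (Fin (m+3))) ≃g
      (cycleGraph (m+3) ⊕g cycleGraph (m+3))) := by
  classical
  set k := m + 3 with hkm
  set G := cycleGraph k with hG
  have hclass : ∀ p : ParityVert G (∅ : Set (Fin k)),
      p.1.2 = ∅ ∨ p.1.2 = G.incidenceSet p.1.1 := by
    rintro ⟨⟨v, S⟩, hsub, hpar⟩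
    have h0 : (({v} : Set (Fin k)) ∩ ∅).ncard % 2 = 0 := by simp
    rw [h0] at hpar
    rw [show G.incidenceSet v = {cedge (v-1), cedge v} from cyc_incidenceSet v] at hsub
    show S = ∅ ∨ S = G.incidenceSet v
    rw [show G.incidenceSet v = {cedge (v-1), cedge v} from cyc_incidenceSet v]
    exact subset_pair_even (cedge_pred_ne v) hsub hpar
  have hne : ∀ v : Fin k, G.incidenceSet v ≠ ∅ := by
    intro v h
    have : cedge v ∈ G.incidenceSet v := (mk'_mem_incidenceSet_iff G).2 ⟨adj_succ v, Or.inl rfl⟩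
    rw [h] at this
    exact this
  let f : ParityVert G (∅ : Set (Fin k)) → Fin k ⊕ Fin k :=
    fun p => if p.1.2 = ∅ then Sum.inl p.1.1 else Sum.inr p.1.1
  let g : Fin k ⊕ Fin k → ParityVert G (∅ : Set (Fin k)) := fun x =>
    match x with
    | Sum.inl v => ⟨(v, ∅), Set.empty_subset _, by simp⟩
    | Sum.inr v => ⟨(v, G.incidenceSet v), subset_rfl, by
        show (G.incidenceSet v).ncard % 2 = _
        rw [cyc_incidence_ncard v]; simp⟩
  have hf_empty : ∀ (p : ParityVert G (∅ : Set (Fin k))), p.1.2 = ∅ → f p = Sum.inl p.1.1 := by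
    intro p hp; simp [f, hp]
  have hf_full : ∀ (p : ParityVert G (∅ : Set (Fin k))), p.1.2 = G.incidenceSet p.1.1 →
      f p = Sum.inr p.1.1 := by
    intro p hp
    have : p.1.2 ≠ ∅ := by rw [hp]; exact hne _
    simp [f, this]
  refine ⟨⟨⟨f, g, ?_, ?_⟩, ?_⟩⟩
  · intro p
    rcases hclass p with hp | hp
    · rw [hf_empty p hp]
      exact Subtype.ext (Prod.ext rfl hp.symm)
    · rw [hf_full p hp]
      exact Subtype.ext (Prod.ext rfl hp.symm)
  · rintro (v | v)
    · rw [hf_empty _ rfl]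
    · rw [hf_full _ rfl]
  · rintro x y
    show (G ⊕g G).Adj (f x) (f y) ↔ _
    rcases hclass x with hx | hx <;> rcases hclass y with hy | hy
    · rw [hf_empty _ hx, hf_empty _ hy, parity_adj, hx, hy]
      simp
    · rw [hf_empty _ hx, hf_full _ hy, parity_adj, hx, hy]
      simp only [SimpleGraph.sum_adj]
      constructor
      · exact fun h => h.elim
      · rintro ⟨hadj, hmem⟩
        exact absurd (hmem.2 ((mk'_mem_incidenceSet_iff G).2 ⟨hadj, Or.inr rfl⟩))
          (Set.notMem_empty _)
    · rw [hf_full _ hx, hf_empty _ hy, parity_adj, hx, hy]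
      simp only [SimpleGraph.sum_adj]
      constructor
      · exact fun h => h.elim
      · rintro ⟨hadj, hmem⟩
        exact absurd (hmem.1 ((mk'_mem_incidenceSet_iff G).2 ⟨hadj, Or.inl rfl⟩))
          (Set.notMem_empty _)
    · rw [hf_full _ hx, hf_full _ hy, parity_adj, hx, hy]
      simp only [SimpleGraph.sum_adj]
      constructor
      · intro h
        refine ⟨h, ?_, ?_⟩
        · intro _; exact (mk'_mem_incidenceSet_iff G).2 ⟨h, Or.inr rfl⟩
        · intro _; exact (mk'_mem_incidenceSet_iff G).2 ⟨h, Or.inl rfl⟩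
      · exact fun h => h.1

lemma bitOut (v0 : Fin (m+3)) (i : Fin (2*(m+3))) :
    cedge (pvert m v0 i) ∈ pset m v0 i ↔ i.val < m + 3 := by
  have hil := i.isLt
  unfold pset
  split_ifs with h1 h2 h3
  · have hv : pvert m v0 i = v0 := pvert_eq_v0 (by simp [h1])
    rw [hv]
    simp only [Set.mem_singleton_iff]
    constructor
    · intro _; omega
    · intro _; trivial
  · have hv : pvert m v0 i = v0 := pvert_eq_v0 (by simp [h2])
    rw [hv]
    simp only [Set.mem_singleton_iff]
    constructor
    · intro h; exact absurd h.symm (cedge_pred_ne v0)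
    · intro h; omega
  · simp only [cedge_mem_incidence, true_iff]; omega
  · simp only [Set.mem_empty_iff_false, false_iff]; omega

lemma bitIn (v0 : Fin (m+3)) (i : Fin (2*(m+3))) :
    cedge (pvert m v0 i - 1) ∈ pset m v0 i ↔ (0 < i.val ∧ i.val ≤ m + 3) := by
  have hil := i.isLt
  unfold pset
  split_ifs with h1 h2 h3
  · have hv : pvert m v0 i = v0 := pvert_eq_v0 (by simp [h1])
    rw [hv]
    simp only [Set.mem_singleton_iff]
    constructor
    · intro h; exact absurd h (cedge_pred_ne v0)
    · intro h; omega
  · have hv : pvert m v0 i = v0 := pvert_eq_v0 (by simp [h2])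
    rw [hv]
    simp only [Set.mem_singleton_iff]
    constructor
    · intro _; omega
    · intro _; trivial
  · simp only [cedge_pred_mem_incidence, true_iff]; omega
  · simp only [Set.mem_empty_iff_false, false_iff]; omega

lemma pvert_eq_iff {v0 x : Fin (m+3)} {i : Fin (2*(m+3))} :
    pvert m v0 i = v0 + x ↔ i.val % (m+3) = x.val := by
  unfold pvert
  rw [add_right_inj, Fin.ext_iff]

set_option maxHeartbeats 1000000 in
lemma part2 (m : ℕ) (v0 : Fin (m+3)) :
    Nonempty (parityGraph (cycleGraph (m+3)) ({v0} : Set (Fin (m+3))) ≃g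
      cycleGraph (2*(m+3))) := by
  classical
  let ψ : Fin (2*(m+3)) → ParityVert (cycleGraph (m+3)) {v0} :=
    fun i => ⟨(pvert m v0 i, pset m v0 i), pset_mem v0 i⟩
  have hinj : Function.Injective ψ := by
    intro i j hij
    have h1 : pvert m v0 i = pvert m v0 j := congrArg (fun p => p.1.1) hij
    have h2 : pset m v0 i = pset m v0 j := congrArg (fun p => p.1.2) hij
    have h3 : i.val % (m+3) = j.val % (m+3) := by
      unfold pvert at h1
      exact congrArg Fin.val ((add_right_inj v0).1 h1)
    have h4 : (i.val < m+3) ↔ (j.val < m+3) := by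
      rw [← bitOut v0 i, h1, h2, bitOut v0 j]
    have hi := i.isLt
    have hj := j.isLt
    apply Fin.ext
    rw [mod2_helper (by omega) hi, mod2_helper (by omega) hj] at h3
    split_ifs at h3 <;> omega
  have hsurj : Function.Surjective ψ := by
    rintro ⟨⟨v, S⟩, hsub, hpar⟩
    rw [show (cycleGraph (m+3)).incidenceSet (v, S).1 = {cedge (v-1), cedge v} from
      cyc_incidenceSet v] at hsub
    by_cases hv : v = v0
    · subst hv
      have hpar' : S.ncard % 2 = 1 := by
        rw [hpar, Set.inter_self, Set.ncard_singleton]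
      rcases subset_pair_odd (cedge_pred_ne v) hsub hpar' with rfl | rfl
      · refine ⟨⟨m+3, by omega⟩, Subtype.ext (Prod.ext (pvert_eq_v0 (by simp)) ?_)⟩
        show pset m v ⟨m+3, by omega⟩ = {cedge (v - 1)}
        unfold pset
        simp
      · refine ⟨⟨0, by omega⟩, Subtype.ext (Prod.ext (pvert_eq_v0 (by simp)) ?_)⟩
        show pset m v ⟨0, by omega⟩ = {cedge v}
        unfold pset
        simp
    · have hpar' : S.ncard % 2 = 0 := by
        rw [hpar, show ({v} : Set (Fin (m+3))) ∩ {v0} = ∅ by simp [Ne.symm hv], Set.ncard_empty]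
      have hdlt : (v - v0).val < m + 3 := (v - v0).isLt
      have hd0 : (v - v0).val ≠ 0 := by
        intro h
        exact hv (by linear_combination (Fin.ext h : v - v0 = 0))
      have hvv : v0 + (v - v0) = v := by ring
      rcases subset_pair_even (cedge_pred_ne v) hsub hpar' with rfl | rfl
      · have hlt : (v - v0).val + (m+3) < 2*(m+3) := by omega
        have hpv : pvert m v0 ⟨(v - v0).val + (m+3), hlt⟩ = v := by
          refine ((pvert_eq_iff (x := v - v0)).2 ?_).trans hvv
          show ((v - v0).val + (m+3)) % (m+3) = _
          rw [Nat.add_mod_right, Nat.mod_eq_of_lt hdlt]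
        have hps : pset m v0 ⟨(v - v0).val + (m+3), hlt⟩ = ∅ := by
          unfold pset
          rw [if_neg (show ¬((v - v0).val + (m+3) = 0) by omega),
              if_neg (show ¬((v - v0).val + (m+3) = m+3) by omega),
              if_neg (show ¬((v - v0).val + (m+3) < m+3) by omega)]
        exact ⟨⟨(v - v0).val + (m+3), hlt⟩, Subtype.ext (Prod.ext hpv hps)⟩
      · have hlt : (v - v0).val < 2*(m+3) := by omega
        have hpv : pvert m v0 ⟨(v - v0).val, hlt⟩ = v := by
          refine ((pvert_eq_iff (x := v - v0)).2 ?_).trans hvv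
          show (v - v0).val % (m+3) = _
          rw [Nat.mod_eq_of_lt hdlt]
        have hps : pset m v0 ⟨(v - v0).val, hlt⟩ = {cedge (v-1), cedge v} := by
          unfold pset
          rw [if_neg (show ¬((v - v0).val = 0) from hd0),
              if_neg (show ¬((v - v0).val = m+3) by omega),
              if_pos (show (v - v0).val < m+3 from hdlt), hpv]
          exact cyc_incidenceSet v
        exact ⟨⟨(v - v0).val, hlt⟩, Subtype.ext (Prod.ext hpv hps)⟩
  have hrel : ∀ i j : Fin (2*(m+3)), (parityGraph (cycleGraph (m+3)) {v0}).Adj (ψ i) (ψ j) ↔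
      (cycleGraph (2*(m+3))).Adj i j := by
    intro i j
    rw [parity_adj]
    show ((cycleGraph (m+3)).Adj (pvert m v0 i) (pvert m v0 j) ∧
      (s(pvert m v0 i, pvert m v0 j) ∈ pset m v0 i ↔
        s(pvert m v0 i, pvert m v0 j) ∈ pset m v0 j)) ↔ _
    have key : ((cycleGraph (m+3)).Adj (pvert m v0 i) (pvert m v0 j) ∧
        (s(pvert m v0 i, pvert m v0 j) ∈ pset m v0 i ↔
          s(pvert m v0 i, pvert m v0 j) ∈ pset m v0 j)) ↔
        ((pvert m v0 j = pvert m v0 i + 1 ∧ (i.val < m+3 ↔ (0 < j.val ∧ j.val ≤ m+3))) ∨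
         (pvert m v0 i = pvert m v0 j + 1 ∧ (j.val < m+3 ↔ (0 < i.val ∧ i.val ≤ m+3)))) := by
      constructor
      · rintro ⟨hadj, hbit⟩
        rcases cyc_adj_iff.1 hadj with hA | hB
        · left
          refine ⟨hA, ?_⟩
          have hs : s(pvert m v0 i, pvert m v0 j) = cedge (pvert m v0 i) := by rw [hA]
          have hji : pvert m v0 j - 1 = pvert m v0 i := by rw [hA]; ring
          rw [hs] at hbit
          rw [← bitOut v0 i, ← bitIn v0 j, hji]
          exact hbit
        · right
          refine ⟨hB, ?_⟩
          have hs : s(pvert m v0 i, pvert m v0 j) = cedge (pvert m v0 j) := by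
            rw [hB, Sym2.eq_swap]
          have hij : pvert m v0 i - 1 = pvert m v0 j := by rw [hB]; ring
          rw [hs] at hbit
          rw [← bitOut v0 j, ← bitIn v0 i, hij]
          exact hbit.symm
      · rintro (⟨hA, hbit⟩ | ⟨hB, hbit⟩)
        · refine ⟨cyc_adj_iff.2 (Or.inl hA), ?_⟩
          have hs : s(pvert m v0 i, pvert m v0 j) = cedge (pvert m v0 i) := by rw [hA]
          have hji : pvert m v0 j - 1 = pvert m v0 i := by rw [hA]; ring
          rw [hs]
          constructor
          · intro h
            have := (bitIn v0 j).2 (hbit.1 ((bitOut v0 i).1 h))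
            rwa [hji] at this
          · intro h
            rw [← hji] at h
            exact (bitOut v0 i).2 (hbit.2 ((bitIn v0 j).1 h))
        · refine ⟨cyc_adj_iff.2 (Or.inr hB), ?_⟩
          have hs : s(pvert m v0 i, pvert m v0 j) = cedge (pvert m v0 j) := by
            rw [hB, Sym2.eq_swap]
          have hij : pvert m v0 i - 1 = pvert m v0 j := by rw [hB]; ring
          rw [hs]
          constructor
          · intro h
            rw [← hij] at h
            exact (bitOut v0 j).2 (hbit.2 ((bitIn v0 i).1 h))
          · intro h
            have := (bitIn v0 i).2 (hbit.1 ((bitOut v0 j).1 h))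
            rwa [hij] at this
    rw [key, pvert_succ_iff, pvert_succ_iff, cycleGraph_adj', fin_sub_val, fin_sub_val]
    have hi := i.isLt
    have hj := j.isLt
    rw [mod2_helper (n := m+3) (by omega) hi, mod2_helper (n := m+3) (by omega) hj,
      mod2_helper (n := 2*(m+3)) (by omega) (show 2*(m+3) - j.val + i.val < 2*(2*(m+3)) by omega),
      mod2_helper (n := 2*(m+3)) (by omega) (show 2*(m+3) - i.val + j.val < 2*(2*(m+3)) by omega)]
    split_ifs <;> omega
  exact ⟨(RelIso.mk (Equiv.ofBijective ψ ⟨hinj, hsurj⟩) (fun {i j} => hrel i j)).symm⟩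

/-- For the cycle `G = C_k` (`k ≥ 3`), the parity graph `G_∅` is
isomorphic to the disjoint union of two `k`-cycles, and `G_{{v}}` (for any vertex `v`)
is isomorphic to the cycle of length `2k`. -/
theorem parityGraph_cycle (k : ℕ) (hk : 3 ≤ k) :
    Nonempty (parityGraph (cycleGraph k) (∅ : Set (Fin k)) ≃g
      (cycleGraph k ⊕g cycleGraph k)) ∧
    ∀ v : Fin k,
      Nonempty (parityGraph (cycleGraph k) ({v} : Set (Fin k)) ≃g cycleGraph (2 * k)) := by
  obtain ⟨m, rfl⟩ : ∃ m, k = m + 3 := ⟨k - 3, by omega⟩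
  exact ⟨part1 m, fun v => part2 m v⟩
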